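/- Let F be the free group on countably many generators x_n, n ∈ ℕ. Then the set S(F) of subsets of F that are subgroups of F is a Borel subset of 2^F, and there is a Borel function H ↦ B_H from S(F) to 2^F such that for every subgroup H of F, the set B_H is a free generating set of H: B_H ⊆ H, B_H generates H, and H is a free group with basis B_H (equivalently, the canonical homomorphism from the free group on B_H to H is an isomorphism). -/

import Mathlib

open FreeGroup

namespace BorelNS

noncomputable section

/-- encode letters into ℕ -/
def lkey (p : ℕ × Bool) : ℕ := 2 * p.1 + cond p.2 1 0

lemma lkey_injective : Function.Injective lkey := by
  rintro ⟨n, b⟩ ⟨m, c⟩ h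
  cases b <;> cases c <;>
    simp only [lkey, Bool.cond_true, Bool.cond_false] at h
  · exact Prod.ext (by omega) rfl
  · exact absurd h (by omega)
  · exact absurd h (by omega)
  · exact Prod.ext (by omega) rfl

/-- the key of a free group element: its reduced word, with letters encoded in ℕ -/
def wkey (x : FreeGroup ℕ) : List ℕ := x.toWord.map lkey

lemma wkey_injective : Function.Injective wkey := by
  intro x y h
  exact toWord_injective (List.map_injective_iff.2 lkey_injective h)

/-- shortlex order on the free group -/
def slt (x y : FreeGroup ℕ) : Prop :=
  (wkey x).length < (wkey y).length ∨
    ((wkey x).length = (wkey y).length ∧ List.Lex (· < ·) (wkey x) (wkey y))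

lemma not_slt_one (x : FreeGroup ℕ) : ¬ slt x 1 := by
  rintro (h | ⟨h1, h2⟩)
  · simp [wkey, toWord_one] at h
  · simp only [wkey, toWord_one, List.map_nil] at h2
    exact List.not_lex_nil h2

lemma eq_of_not_slt {x y : FreeGroup ℕ} (h1 : ¬ slt x y) (h2 : ¬ slt y x) : x = y := by
  apply wkey_injective
  rcases lt_trichotomy (wkey x).length (wkey y).length with hl | hl | hl
  · exact absurd (Or.inl hl) h1
  · rcases @trichotomous _ _ (List.Lex.trichotomous ((· < ·) : ℕ → ℕ → Prop)) (wkey x) (wkey y) with h | h | h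
    · exact absurd (Or.inr ⟨hl, h⟩) h1
    · exact h
    · exact absurd (Or.inr ⟨hl.symm, h⟩) h2
  · exact absurd (Or.inl hl) h2

/-- every nonempty family of lists of fixed length has a lex-least element -/
lemma lex_exists_min : ∀ (n : ℕ) (S : Set (List ℕ)), S.Nonempty → (∀ l ∈ S, l.length = n) →
    ∃ m ∈ S, ∀ l ∈ S, ¬ List.Lex (· < ·) l m := by
  intro n
  induction n with
  | zero =>
    intro S hS hlen
    obtain ⟨l, hl⟩ := hS
    have : l = [] := List.length_eq_zero_iff.1 (hlen l hl)
    subst this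
    exact ⟨[], hl, fun l' _ h => List.not_lex_nil h⟩
  | succ n ih =>
    intro S hS hlen
    have hne : {a : ℕ | ∃ t, a :: t ∈ S}.Nonempty := by
      obtain ⟨l, hl⟩ := hS
      rcases l with _ | ⟨a, t⟩
      · have := hlen _ hl; simp at this
      · exact ⟨a, t, hl⟩
    set c := sInf {a : ℕ | ∃ t, a :: t ∈ S} with hc
    obtain ⟨t₁, ht₁⟩ := Nat.sInf_mem hne
    have hS' : {t | c :: t ∈ S}.Nonempty := ⟨t₁, ht₁⟩
    obtain ⟨t₀, ht₀, ht₀min⟩ := ih {t | c :: t ∈ S} hS'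
      (fun t ht => by have := hlen _ ht; simpa using this)
    refine ⟨c :: t₀, ht₀, ?_⟩
    rintro l hl hlex
    rcases l with _ | ⟨a, t⟩
    · have := hlen _ hl; simp at this
    · cases hlex with
      | cons h => exact ht₀min t hl h
      | rel h => exact absurd h (not_lt.2 (Nat.sInf_le ⟨t, hl⟩))

/-- every nonempty subset of the free group has a shortlex-least element -/
lemma slt_exists_min (A : Set (FreeGroup ℕ)) (hA : A.Nonempty) :
    ∃ m ∈ A, ∀ x ∈ A, ¬ slt x m := by
  have hne : {k | ∃ x ∈ A, (wkey x).length = k}.Nonempty := by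
    obtain ⟨x, hx⟩ := hA; exact ⟨_, x, hx, rfl⟩
  set L := sInf {k | ∃ x ∈ A, (wkey x).length = k} with hL
  obtain ⟨x₁, hx₁, hx₁len⟩ := Nat.sInf_mem hne
  have hS : (wkey '' {x ∈ A | (wkey x).length = L}).Nonempty := ⟨_, ⟨x₁, ⟨hx₁, hx₁len⟩, rfl⟩⟩
  obtain ⟨m, ⟨x₀, ⟨hx₀A, hx₀len⟩, rfl⟩, hmin⟩ := lex_exists_min L _ hS
    (by rintro l ⟨x, ⟨_, hx⟩, rfl⟩; exact hx)
  refine ⟨x₀, hx₀A, ?_⟩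
  rintro x hx (h | ⟨h1, h2⟩)
  · rw [hx₀len] at h
    exact absurd h (not_lt.2 (Nat.sInf_le ⟨x, hx, rfl⟩))
  · exact hmin _ ⟨x, ⟨hx, h1.trans hx₀len⟩, rfl⟩ h2

open scoped Classical in
/-- the shortlex-least element of a set (or `1` if the set is empty) -/
def sMin (A : Set (FreeGroup ℕ)) : FreeGroup ℕ :=
  if h : A.Nonempty then (slt_exists_min A h).choose else 1

open scoped Classical in
lemma sMin_mem {A : Set (FreeGroup ℕ)} (h : A.Nonempty) : sMin A ∈ A := by
  rw [sMin, dif_pos h]; exact (slt_exists_min A h).choose_spec.1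

open scoped Classical in
lemma sMin_min {A : Set (FreeGroup ℕ)} (h : A.Nonempty) {x : FreeGroup ℕ} (hx : x ∈ A) :
    ¬ slt x (sMin A) := by
  rw [sMin, dif_pos h]; exact (slt_exists_min A h).choose_spec.2 x hx

open scoped Classical in
lemma sMin_empty {A : Set (FreeGroup ℕ)} (h : ¬ A.Nonempty) : sMin A = 1 := by
  rw [sMin, dif_neg h]

/-- characterization of `sMin` -/
lemma sMin_eq_iff {A : Set (FreeGroup ℕ)} {u : FreeGroup ℕ} :
    sMin A = u ↔ ((u ∈ A ∧ ∀ v, slt v u → v ∉ A) ∨ (u = 1 ∧ ∀ v, v ∉ A)) := by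
  constructor
  · rintro rfl
    by_cases h : A.Nonempty
    · exact Or.inl ⟨sMin_mem h, fun v hv hvA => sMin_min h hvA hv⟩
    · exact Or.inr ⟨sMin_empty h, fun v hv => h ⟨v, hv⟩⟩
  · rintro (⟨hu, hmin⟩ | ⟨rfl, hempty⟩)
    · have hne : A.Nonempty := ⟨u, hu⟩
      exact eq_of_not_slt (fun h => hmin _ h (sMin_mem hne)) (sMin_min hne hu)
    · exact sMin_empty (fun ⟨v, hv⟩ => hempty v hv)


lemma reduce_length_le (L : List (ℕ × Bool)) : (FreeGroup.reduce L).length ≤ L.length := by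
  induction L with
  | nil => simp
  | cons x L ih =>
    rw [FreeGroup.reduce.cons]
    rcases hL : FreeGroup.reduce L with _ | ⟨hd, tl⟩
    · simp
    · rw [hL] at ih
      dsimp only
      by_cases hc : x.1 = hd.1 ∧ x.2 = !hd.2
      · rw [if_pos hc]
        simp only [List.length_cons] at ih ⊢
        omega
      · rw [if_neg hc]
        simp only [List.length_cons] at ih ⊢
        omega

lemma reduce_cons_self {a : ℕ × Bool} {t : List (ℕ × Bool)}
    (h : FreeGroup.reduce (a :: t) = a :: t) : FreeGroup.reduce t = t := by
  rw [FreeGroup.reduce.cons] at h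
  rcases hL : FreeGroup.reduce t with _ | ⟨hd, tl⟩
  · rw [hL] at h
    dsimp only at h
    have ht : t = [] := (List.cons.injEq _ _ _ _ ▸ h).2.symm
    rw [ht]
  · rw [hL] at h
    dsimp only at h
    have hle := reduce_length_le t
    rw [hL] at hle
    by_cases hc : a.1 = hd.1 ∧ a.2 = !hd.2
    · rw [if_pos hc] at h
      have h1 : tl.length = t.length + 1 := by rw [h]; simp
      simp only [List.length_cons] at hle
      omega
    · rw [if_neg hc] at h
      have ht : t = hd :: tl := (List.cons.injEq _ _ _ _ ▸ h).2.symm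
      exact ht.symm

lemma mk_nil_eq_one : FreeGroup.mk ([] : List (ℕ × Bool)) = 1 := by
  rw [← FreeGroup.toWord_one, FreeGroup.mk_toWord]

lemma toWord_mk_singleton (a : ℕ × Bool) : (FreeGroup.mk [a]).toWord = [a] := by
  rw [FreeGroup.toWord_mk, FreeGroup.reduce_singleton]

/-- The key combinatorial fact: prepending a letter preserves strict shortlex inequality
against a word starting with that letter. -/
lemma slt_cons {w v' : FreeGroup ℕ} {a : ℕ × Bool} {t : List (ℕ × Bool)}
    (hw : w.toWord = a :: t) (h : slt v' (FreeGroup.mk t)) :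
    slt (FreeGroup.mk [a] * v') w := by
  have hred : FreeGroup.reduce (a :: t) = a :: t := by rw [← hw]; exact reduce_toWord w
  have hredt : FreeGroup.reduce t = t := reduce_cons_self hred
  have htw : (FreeGroup.mk t).toWord = t := by rw [FreeGroup.toWord_mk, hredt]
  have hwlen : (wkey w).length = t.length + 1 := by simp [wkey, hw]
  have hmul : (FreeGroup.mk [a] * v').toWord = FreeGroup.reduce (a :: v'.toWord) := by
    conv_lhs => rw [← FreeGroup.mk_toWord (x := v')]
    rw [FreeGroup.mul_mk, FreeGroup.toWord_mk]
    rfl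
  rcases hsv : v'.toWord with _ | ⟨b, s'⟩
  · -- v' = 1
    have hv1 : v' = 1 := FreeGroup.toWord_eq_nil_iff.1 hsv
    subst hv1
    have htpos : 0 < t.length := by
      by_contra h0
      have ht : t = [] := List.length_eq_zero_iff.1 (by omega)
      subst ht
      exact not_slt_one _ (by rwa [mk_nil_eq_one] at h)
    left
    rw [hwlen]
    have : (FreeGroup.mk [a] * 1).toWord = [a] := by
      rw [mul_one, toWord_mk_singleton]
    simp [wkey, this]
    omega
  · -- v'.toWord = b :: s'
    have hlenv : (wkey v').length = s'.length + 1 := by simp [wkey, hsv]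
    have hltv : (wkey (FreeGroup.mk t)).length = t.length := by simp [wkey, htw]
    rw [hsv] at hmul
    rw [FreeGroup.reduce.cons] at hmul
    have hredbs : FreeGroup.reduce (b :: s') = b :: s' := by rw [← hsv]; exact reduce_toWord v'
    rw [hredbs] at hmul
    dsimp only at hmul
    by_cases hc : a.1 = b.1 ∧ a.2 = !b.2
    · -- cancellation
      rw [if_pos hc] at hmul
      left
      rw [hwlen]
      have hs'len : (wkey (FreeGroup.mk [a] * v')).length = s'.length := by
        simp [wkey, hmul]
      rw [hs'len]
      -- from h : slt v' (mk t), get s'.length + 1 ≤ t.length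
      rcases h with h | ⟨h1, _⟩
      · rw [hlenv, hltv] at h; omega
      · rw [hlenv, hltv] at h1; omega
    · -- no cancellation
      rw [if_neg hc] at hmul
      have hkeymul : wkey (FreeGroup.mk [a] * v') = lkey a :: wkey v' := by
        rw [wkey, hmul, wkey, hsv]
        simp
      have hkeyw : wkey w = lkey a :: wkey (FreeGroup.mk t) := by
        rw [wkey, hw, wkey, htw]
        simp
      rcases h with h | ⟨h1, h2⟩
      · left
        rw [hkeymul, hkeyw]
        simp only [List.length_cons]
        omega
      · right
        constructor
        · rw [hkeymul, hkeyw]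
          simp only [List.length_cons]
          omega
        · rw [hkeymul, hkeyw]
          exact List.Lex.cons h2

section Schreier

open scoped Classical

variable (H : Subgroup (FreeGroup ℕ))

/-- the shortlex-minimal representative of a left coset -/
def rep (q : FreeGroup ℕ ⧸ H) : FreeGroup ℕ :=
  sMin {u : FreeGroup ℕ | (u : FreeGroup ℕ ⧸ H) = q}

lemma rep_spec (q : FreeGroup ℕ ⧸ H) : ((rep H q : FreeGroup ℕ) : FreeGroup ℕ ⧸ H) = q := by
  have hne : {u : FreeGroup ℕ | (u : FreeGroup ℕ ⧸ H) = q}.Nonempty :=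
    ⟨q.out, QuotientGroup.out_eq' q⟩
  exact sMin_mem hne

lemma rep_min {q : FreeGroup ℕ ⧸ H} {v : FreeGroup ℕ} (hv : (v : FreeGroup ℕ ⧸ H) = q) :
    ¬ slt v (rep H q) :=
  sMin_min ⟨v, hv⟩ hv

lemma rep_unique {q : FreeGroup ℕ ⧸ H} {v : FreeGroup ℕ} (hv : (v : FreeGroup ℕ ⧸ H) = q)
    (hmin : ∀ u : FreeGroup ℕ, (u : FreeGroup ℕ ⧸ H) = q → ¬ slt u v) : rep H q = v :=
  eq_of_not_slt (hmin _ (rep_spec H q)) (rep_min H hv)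

lemma rep_one : rep H ((1 : FreeGroup ℕ) : FreeGroup ℕ ⧸ H) = 1 :=
  rep_unique H rfl (fun u _ => not_slt_one u)

lemma smul_coe (g u : FreeGroup ℕ) :
    g • ((u : FreeGroup ℕ) : FreeGroup ℕ ⧸ H) = ((g * u : FreeGroup ℕ) : FreeGroup ℕ ⧸ H) := by
  rw [MulAction.Quotient.smul_mk, smul_eq_mul]

/-- the Schreier generating set -/
def schreier : Set (FreeGroup ℕ) :=
  {x | x ≠ 1 ∧ ∃ (q : FreeGroup ℕ ⧸ H) (n : ℕ),
    x = (rep H (FreeGroup.of n • q))⁻¹ * FreeGroup.of n * rep H q}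

lemma coe_mul_rep (n : ℕ) (q : FreeGroup ℕ ⧸ H) :
    ((FreeGroup.of n * rep H q : FreeGroup ℕ) : FreeGroup ℕ ⧸ H) = FreeGroup.of n • q := by
  conv_rhs => rw [← rep_spec H q]
  rw [smul_coe]

lemma schreier_val_mem {x : FreeGroup ℕ} (hx : x ∈ schreier H) : x ∈ H := by
  obtain ⟨-, q, n, rfl⟩ := hx
  have h1 : ((rep H (FreeGroup.of n • q) : FreeGroup ℕ) : FreeGroup ℕ ⧸ H)
      = ((FreeGroup.of n * rep H q : FreeGroup ℕ) : FreeGroup ℕ ⧸ H) := by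
    rw [rep_spec, coe_mul_rep]
  have h2 := QuotientGroup.eq.1 h1
  rwa [← mul_assoc] at h2

/-- map sending a Schreier generator (as an element of the ambient group) to the
corresponding generator of the free group on the Schreier set -/
def toX (w : FreeGroup ℕ) : FreeGroup (schreier H) :=
  if h : w ∈ schreier H then FreeGroup.of (⟨w, h⟩ : schreier H) else 1

lemma toX_one : toX H 1 = 1 := by
  rw [toX, dif_neg]
  rintro ⟨h, -⟩
  exact h rfl

/-- the labelling of edges of the Schreier graph -/
def sig (n : ℕ) : (FreeGroup ℕ ⧸ H) → FreeGroup (schreier H) := fun q =>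
  toX H ((rep H q)⁻¹ * FreeGroup.of n * rep H ((FreeGroup.of n)⁻¹ • q))

/-- the rewriting homomorphism, with values in a semidirect product -/
def Phi : FreeGroup ℕ →*
    ((FreeGroup ℕ ⧸ H) → FreeGroup (schreier H)) ⋊[mulAutArrow] FreeGroup ℕ :=
  FreeGroup.lift fun n => ⟨sig H n, FreeGroup.of n⟩

lemma Phi_right (g : FreeGroup ℕ) : (Phi H g).right = g := by
  have h : SemidirectProduct.rightHom.comp (Phi H) = MonoidHom.id (FreeGroup ℕ) := by
    apply FreeGroup.ext_hom
    intro n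
    simp only [MonoidHom.comp_apply, Phi, FreeGroup.lift_apply_of, MonoidHom.id_apply]
    rfl
  exact DFunLike.congr_fun h g

/-- the crossed homomorphism -/
def lam (g : FreeGroup ℕ) (q : FreeGroup ℕ ⧸ H) : FreeGroup (schreier H) := (Phi H g).left q

lemma lam_one (q : FreeGroup ℕ ⧸ H) : lam H 1 q = 1 := by
  simp [lam]

lemma lam_of (n : ℕ) (q : FreeGroup ℕ ⧸ H) : lam H (FreeGroup.of n) q = sig H n q := by
  simp only [lam, Phi, FreeGroup.lift_apply_of]

lemma lam_mul (g h : FreeGroup ℕ) (q : FreeGroup ℕ ⧸ H) :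
    lam H (g * h) q = lam H g q * lam H h (g⁻¹ • q) := by
  simp only [lam]
  rw [(Phi H).map_mul, SemidirectProduct.mul_left, Phi_right, Pi.mul_apply]
  rfl

lemma lam_inv (g : FreeGroup ℕ) (q : FreeGroup ℕ ⧸ H) :
    lam H g⁻¹ q = (lam H g (g • q))⁻¹ := by
  have h := lam_mul H g⁻¹ g q
  rw [inv_mul_cancel, lam_one, inv_inv] at h
  exact eq_inv_of_mul_eq_one_left h.symm

lemma of_eq_mk (m : ℕ) : FreeGroup.of m = FreeGroup.mk [(m, true)] := rfl

lemma inv_of_eq_mk (m : ℕ) : (FreeGroup.of m)⁻¹ = FreeGroup.mk [(m, false)] := by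
  rw [of_eq_mk, FreeGroup.inv_mk]
  rfl

/-- Key lemma: the loop read along the tree path to `q` is trivial. -/
lemma lam_rep (q : FreeGroup ℕ ⧸ H) : lam H (rep H q) q = 1 := by
  generalize hn : (rep H q).toWord.length = n
  induction n using Nat.strong_induction_on generalizing q with
  | _ n ih =>
  rcases hw : (rep H q).toWord with _ | ⟨a, t⟩
  · rw [FreeGroup.toWord_eq_nil_iff.1 hw, lam_one]
  · have hred : FreeGroup.reduce (a :: t) = a :: t := by
      rw [← hw]; exact FreeGroup.reduce_toWord _
    have hredt : FreeGroup.reduce t = t := reduce_cons_self hred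
    have htw : (FreeGroup.mk t).toWord = t := by rw [FreeGroup.toWord_mk, hredt]
    set ℓ := FreeGroup.mk [a] with hℓ
    set v := FreeGroup.mk t with hv
    have hdecomp : rep H q = ℓ * v := by
      conv_lhs => rw [← FreeGroup.mk_toWord (x := rep H q), hw]
      rw [hℓ, hv, FreeGroup.mul_mk]
      rfl
    have hvq' : ((v : FreeGroup ℕ) : FreeGroup ℕ ⧸ H) = ℓ⁻¹ • q := by
      conv_rhs => rw [← rep_spec H q, hdecomp]
      rw [smul_coe, inv_mul_cancel_left]
    have hrepq' : rep H (ℓ⁻¹ • q) = v := by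
      apply rep_unique H hvq'
      intro u hu hslt
      have huq : ((ℓ * u : FreeGroup ℕ) : FreeGroup ℕ ⧸ H) = q := by
        rw [← smul_coe, hu, smul_inv_smul]
      exact rep_min H huq (slt_cons hw hslt)
    have hlen : t.length < n := by
      rw [hw] at hn
      simp only [List.length_cons] at hn
      omega
    have hih := ih t.length hlen (ℓ⁻¹ • q) (by rw [hrepq', htw])
    rw [hrepq'] at hih
    rw [hdecomp, lam_mul, hih, mul_one]
    rcases a with ⟨m, bb⟩
    cases bb
    · -- ℓ = (of m)⁻¹
      have hℓm : ℓ = (FreeGroup.of m)⁻¹ := by rw [hℓ]; exact (inv_of_eq_mk m).symm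
      have hinv : FreeGroup.of m • q = ℓ⁻¹ • q := by rw [hℓm, inv_inv]
      rw [hℓm, lam_inv, lam_of]
      simp only [sig]
      rw [inv_smul_smul, hinv, hrepq', hdecomp, hℓm]
      rw [show v⁻¹ * FreeGroup.of m * ((FreeGroup.of m)⁻¹ * v) = 1 by group]
      rw [toX_one, inv_one]
    · -- ℓ = of m
      have hℓm : ℓ = FreeGroup.of m := by rw [hℓ]; exact (of_eq_mk m).symm
      have hinv : (FreeGroup.of m)⁻¹ • q = ℓ⁻¹ • q := by rw [hℓm]
      rw [hℓm, lam_of]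
      simp only [sig]
      rw [hinv, hrepq', hdecomp, hℓm]
      rw [show (FreeGroup.of m * v)⁻¹ * FreeGroup.of m * v = 1 by group]
      exact toX_one H

lemma coe_one_smul {h : FreeGroup ℕ} (hh : h ∈ H) :
    h • ((1 : FreeGroup ℕ) : FreeGroup ℕ ⧸ H) = ((1 : FreeGroup ℕ) : FreeGroup ℕ ⧸ H) := by
  rw [smul_coe, mul_one]
  exact (QuotientGroup.eq).2 (by simpa using inv_mem hh)

/-- evaluation of the rewriting at the base point, as a homomorphism on `H` -/
def evH : H →* FreeGroup (schreier H) where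
  toFun h := lam H (h : FreeGroup ℕ) ((1 : FreeGroup ℕ) : FreeGroup ℕ ⧸ H)
  map_one' := by simpa using lam_one H _
  map_mul' := fun h1 h2 => by
    simp only [Subgroup.coe_mul]
    rw [lam_mul]
    congr 2
    exact coe_one_smul H (inv_mem h1.2)

/-- the canonical map from the free group on the Schreier generators to `H` -/
def iota : FreeGroup (schreier H) →* H :=
  FreeGroup.lift fun b => (⟨(b : FreeGroup ℕ), schreier_val_mem H b.2⟩ : H)

lemma evH_iota (b : schreier H) :
    evH H (iota H (FreeGroup.of b)) = FreeGroup.of b := by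
  rw [iota, FreeGroup.lift_apply_of]
  show lam H (b : FreeGroup ℕ) ((1 : FreeGroup ℕ) : FreeGroup ℕ ⧸ H) = _
  obtain ⟨hne, q, n, hx⟩ := b.2
  have hx' : (b : FreeGroup ℕ)
      = (rep H (FreeGroup.of n • q))⁻¹ * (FreeGroup.of n * rep H q) := by
    rw [hx, mul_assoc]
  rw [hx', lam_mul, lam_mul]
  have p1 : ((rep H (FreeGroup.of n • q))⁻¹)⁻¹ • ((1 : FreeGroup ℕ) : FreeGroup ℕ ⧸ H)
      = FreeGroup.of n • q := by
    rw [inv_inv, smul_coe, mul_one, rep_spec]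
  rw [p1]
  have p2 : (FreeGroup.of n)⁻¹ • (FreeGroup.of n • q) = q := inv_smul_smul _ _
  rw [p2, lam_rep, mul_one, lam_inv]
  have p3 : (rep H (FreeGroup.of n • q)) • ((1 : FreeGroup ℕ) : FreeGroup ℕ ⧸ H)
      = FreeGroup.of n • q := by
    rw [smul_coe, mul_one, rep_spec]
  rw [p3, lam_rep, inv_one, one_mul, lam_of]
  simp only [sig]
  rw [p2, ← hx]
  rw [toX, dif_pos b.2]

lemma iota_injective : Function.Injective (iota H) := by
  have h : (evH H).comp (iota H) = MonoidHom.id _ := by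
    apply FreeGroup.ext_hom
    intro b
    simp only [MonoidHom.comp_apply, MonoidHom.id_apply]
    exact evH_iota H b
  intro x y hxy
  have h1 := DFunLike.congr_fun h x
  have h2 := DFunLike.congr_fun h y
  simp only [MonoidHom.comp_apply, MonoidHom.id_apply] at h1 h2
  rw [← h1, ← h2, hxy]

lemma schreier_closure : Subgroup.closure (schreier H) = H := by
  apply le_antisymm
  · rw [Subgroup.closure_le]
    exact fun x hx => schreier_val_mem H hx
  · intro h hh
    have key : ∀ g : FreeGroup ℕ, ∀ q : FreeGroup ℕ ⧸ H,
        (rep H (g • q))⁻¹ * g * rep H q ∈ Subgroup.closure (schreier H) := by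
      intro g
      induction g using FreeGroup.induction_on with
      | C1 =>
        intro q
        rw [one_smul]
        rw [show (rep H q)⁻¹ * 1 * rep H q = 1 by group]
        exact one_mem _
      | of n =>
        intro q
        by_cases hx : (rep H (FreeGroup.of n • q))⁻¹ * FreeGroup.of n * rep H q = 1
        · rw [hx]
          exact one_mem _
        · exact Subgroup.subset_closure ⟨hx, q, n, rfl⟩
      | inv_of n ih =>
        intro q
        show (rep H ((FreeGroup.of n)⁻¹ • q))⁻¹ * (FreeGroup.of n)⁻¹ * rep H q ∈ _
        have h1 := ih ((FreeGroup.of n)⁻¹ • q)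
        rw [smul_inv_smul] at h1
        have e : (rep H ((FreeGroup.of n)⁻¹ • q))⁻¹ * (FreeGroup.of n)⁻¹ * rep H q
            = ((rep H q)⁻¹ * FreeGroup.of n * rep H ((FreeGroup.of n)⁻¹ • q))⁻¹ := by group
        rw [e]
        exact inv_mem h1
      | mul g1 g2 ih1 ih2 =>
        intro q
        have e : (rep H ((g1 * g2) • q))⁻¹ * (g1 * g2) * rep H q
            = ((rep H (g1 • g2 • q))⁻¹ * g1 * rep H (g2 • q))
              * ((rep H (g2 • q))⁻¹ * g2 * rep H q) := by
          rw [mul_smul]; group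
        rw [e]
        exact mul_mem (ih1 _) (ih2 _)
    have hk := key h ((1 : FreeGroup ℕ) : FreeGroup ℕ ⧸ H)
    rw [coe_one_smul H hh, rep_one] at hk
    simpa using hk

/-- the injectivity statement for the inclusion into the ambient free group -/
lemma lift_schreier_injective :
    Function.Injective (FreeGroup.lift (fun y : schreier H => (y : FreeGroup ℕ))) := by
  have heq : FreeGroup.lift (fun y : schreier H => (y : FreeGroup ℕ))
      = (H.subtype).comp (iota H) := by
    apply FreeGroup.ext_hom
    intro b
    simp [iota, FreeGroup.lift_apply_of]
  rw [heq]
  exact (Subtype.coe_injective).comp (iota_injective H)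

end Schreier

instance : Countable (FreeGroup ℕ) := FreeGroup.toWord_injective.countable

section Borel

open scoped Classical

/-- the coset minimum, computed from a characteristic function -/
def cm (f : FreeGroup ℕ → Bool) (g : FreeGroup ℕ) : FreeGroup ℕ :=
  sMin {u : FreeGroup ℕ | f (g⁻¹ * u) = true}

/-- the Borel choice of free basis -/
def bFun (f : FreeGroup ℕ → Bool) (x : FreeGroup ℕ) : Bool :=
  decide (x ≠ 1 ∧ ∃ (g : FreeGroup ℕ) (n : ℕ),
    x = (cm f (FreeGroup.of n * g))⁻¹ * FreeGroup.of n * cm f g)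

lemma cm_eq_rep {f : FreeGroup ℕ → Bool} {H : Subgroup (FreeGroup ℕ)}
    (hf : ∀ x, f x = true ↔ x ∈ H) (g : FreeGroup ℕ) :
    cm f g = rep H ((g : FreeGroup ℕ) : FreeGroup ℕ ⧸ H) := by
  rw [cm, rep]
  congr 1
  ext u
  rw [Set.mem_setOf_eq, Set.mem_setOf_eq, hf, QuotientGroup.eq]
  constructor
  · intro h; simpa using inv_mem h
  · intro h; simpa using inv_mem h

lemma bFun_eq_schreier {f : FreeGroup ℕ → Bool} {H : Subgroup (FreeGroup ℕ)}
    (hf : ∀ x, f x = true ↔ x ∈ H) :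
    {x | bFun f x = true} = schreier H := by
  ext x
  rw [Set.mem_setOf_eq, bFun, decide_eq_true_iff]
  constructor
  · rintro ⟨hx1, g, n, hx⟩
    refine ⟨hx1, ((g : FreeGroup ℕ) : FreeGroup ℕ ⧸ H), n, ?_⟩
    rw [hx, cm_eq_rep hf, cm_eq_rep hf]
    rw [← smul_coe H (FreeGroup.of n) g]
  · rintro ⟨hx1, q, n, hx⟩
    obtain ⟨g, rfl⟩ := QuotientGroup.mk_surjective q
    refine ⟨hx1, g, n, ?_⟩
    rw [hx, cm_eq_rep hf, cm_eq_rep hf]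
    rw [← smul_coe H (FreeGroup.of n) g]

lemma measurable_decide {α : Type*} [MeasurableSpace α] {p : α → Prop} [DecidablePred p]
    (h : MeasurableSet {a | p a}) : Measurable fun a => decide (p a) := by
  have he : (fun a => decide (p a)) = fun a => if p a then true else false := by
    funext a; by_cases hp : p a <;> simp [hp]
  rw [he]
  exact Measurable.ite h measurable_const measurable_const

lemma measurable_coord (x : FreeGroup ℕ) :
    MeasurableSet {f : FreeGroup ℕ → Bool | f x = true} := by
  have he : {f : FreeGroup ℕ → Bool | f x = true}
      = (fun f : FreeGroup ℕ → Bool => f x) ⁻¹' {true} := by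
    ext f; simp
  rw [he]
  exact (measurable_pi_apply x) (measurableSet_singleton true)

lemma measurable_cm_eq (a u : FreeGroup ℕ) :
    MeasurableSet {f : FreeGroup ℕ → Bool | cm f a = u} := by
  have he : {f : FreeGroup ℕ → Bool | cm f a = u}
      = ({f : FreeGroup ℕ → Bool | f (a⁻¹ * u) = true}
          ∩ ⋂ v : FreeGroup ℕ, {f : FreeGroup ℕ → Bool | slt v u → ¬ f (a⁻¹ * v) = true})
        ∪ ({f : FreeGroup ℕ → Bool | u = 1}
          ∩ ⋂ v : FreeGroup ℕ, {f : FreeGroup ℕ → Bool | ¬ f (a⁻¹ * v) = true}) := by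
    ext f
    constructor
    · intro hmem
      rw [Set.mem_setOf_eq, cm, sMin_eq_iff] at hmem
      simp only [Set.mem_union, Set.mem_inter_iff, Set.mem_iInter, Set.mem_setOf_eq]
      tauto
    · intro hmem
      rw [Set.mem_setOf_eq, cm, sMin_eq_iff]
      simp only [Set.mem_union, Set.mem_inter_iff, Set.mem_iInter, Set.mem_setOf_eq] at hmem
      tauto
  rw [he]
  apply MeasurableSet.union
  · apply MeasurableSet.inter (measurable_coord _)
    apply MeasurableSet.iInter
    intro v
    by_cases hv : slt v u
    · have : {f : FreeGroup ℕ → Bool | slt v u → ¬ f (a⁻¹ * v) = true}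
          = {f : FreeGroup ℕ → Bool | f (a⁻¹ * v) = true}ᶜ := by
        ext f; simp [hv]
      rw [this]
      exact (measurable_coord _).compl
    · have : {f : FreeGroup ℕ → Bool | slt v u → ¬ f (a⁻¹ * v) = true} = Set.univ := by
        ext f; simp [hv]
      rw [this]
      exact MeasurableSet.univ
  · apply MeasurableSet.inter (MeasurableSet.const _)
    apply MeasurableSet.iInter
    intro v
    have : {f : FreeGroup ℕ → Bool | ¬ f (a⁻¹ * v) = true}
        = {f : FreeGroup ℕ → Bool | f (a⁻¹ * v) = true}ᶜ := rfl
    rw [this]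
    exact (measurable_coord _).compl

lemma measurable_bFun : Measurable bFun := by
  apply measurable_pi_lambda
  intro x
  simp only [bFun]
  apply measurable_decide
  have he : {f : FreeGroup ℕ → Bool | x ≠ 1 ∧ ∃ (g : FreeGroup ℕ) (n : ℕ),
      x = (cm f (FreeGroup.of n * g))⁻¹ * FreeGroup.of n * cm f g}
      = {f : FreeGroup ℕ → Bool | x ≠ 1} ∩
        ⋃ (g : FreeGroup ℕ), ⋃ (n : ℕ), ⋃ (u : FreeGroup ℕ), ⋃ (v : FreeGroup ℕ),
          ({f : FreeGroup ℕ → Bool | cm f (FreeGroup.of n * g) = u}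
            ∩ {f : FreeGroup ℕ → Bool | cm f g = v}
            ∩ {f : FreeGroup ℕ → Bool | x = u⁻¹ * FreeGroup.of n * v}) := by
    ext f
    simp only [Set.mem_inter_iff, Set.mem_setOf_eq, Set.mem_iUnion]
    constructor
    · rintro ⟨h1, g, n, hx⟩
      exact ⟨h1, g, n, cm f (FreeGroup.of n * g), cm f g, ⟨rfl, rfl⟩, hx⟩
    · rintro ⟨h1, g, n, u, v, ⟨⟨hu, hv⟩, hx⟩⟩
      exact ⟨h1, g, n, by rw [hu, hv, hx]⟩
  rw [he]
  apply MeasurableSet.inter (MeasurableSet.const _)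
  apply MeasurableSet.iUnion; intro g
  apply MeasurableSet.iUnion; intro n
  apply MeasurableSet.iUnion; intro u
  apply MeasurableSet.iUnion; intro v
  exact ((measurable_cm_eq _ _).inter (measurable_cm_eq _ _)).inter (MeasurableSet.const _)

lemma measurable_subgroup_set :
    MeasurableSet {f : FreeGroup ℕ → Bool |
      ∃ H : Subgroup (FreeGroup ℕ), ∀ x, f x = true ↔ x ∈ H} := by
  have he : {f : FreeGroup ℕ → Bool | ∃ H : Subgroup (FreeGroup ℕ), ∀ x, f x = true ↔ x ∈ H}
      = {f : FreeGroup ℕ → Bool | f 1 = true}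
        ∩ ((⋂ (x : FreeGroup ℕ), ⋂ (y : FreeGroup ℕ),
              ({f : FreeGroup ℕ → Bool | f x = true}ᶜ ∪ {f : FreeGroup ℕ → Bool | f y = true}ᶜ
                ∪ {f : FreeGroup ℕ → Bool | f (x * y) = true}))
          ∩ ⋂ (x : FreeGroup ℕ),
              ({f : FreeGroup ℕ → Bool | f x = true}ᶜ
                ∪ {f : FreeGroup ℕ → Bool | f x⁻¹ = true})) := by
    ext f
    simp only [Set.mem_inter_iff, Set.mem_setOf_eq, Set.mem_iInter, Set.mem_union,
      Set.mem_compl_iff]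
    constructor
    · rintro ⟨H, hH⟩
      refine ⟨(hH 1).2 H.one_mem, fun x y => ?_, fun x => ?_⟩
      · by_cases hx : f x = true
        · by_cases hy : f y = true
          · exact Or.inr ((hH _).2 (mul_mem ((hH _).1 hx) ((hH _).1 hy)))
          · exact Or.inl (Or.inr hy)
        · exact Or.inl (Or.inl hx)
      · by_cases hx : f x = true
        · exact Or.inr ((hH _).2 (inv_mem ((hH _).1 hx)))
        · exact Or.inl hx
    · rintro ⟨h1, hm, hi⟩
      refine ⟨{ carrier := {x | f x = true},
                one_mem' := h1,
                mul_mem' := ?_,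
                inv_mem' := ?_ }, fun x => Iff.rfl⟩
      · intro a b ha hb
        rcases hm a b with (h | h) | h
        · exact absurd ha h
        · exact absurd hb h
        · exact h
      · intro a ha
        rcases hi a with h | h
        · exact absurd ha h
        · exact h
  rw [he]
  refine MeasurableSet.inter (measurable_coord _) (MeasurableSet.inter ?_ ?_)
  · apply MeasurableSet.iInter; intro x
    apply MeasurableSet.iInter; intro y
    exact (((measurable_coord x).compl.union (measurable_coord y).compl).union
      (measurable_coord (x * y)))
  · apply MeasurableSet.iInter; intro x
    exact ((measurable_coord x).compl.union (measurable_coord x⁻¹))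

end Borel

end

end BorelNS

/-- **Borel version of the Nielsen–Schreier theorem.**
Identify subsets of the free group `F = FreeGroup ℕ` on countably many generators with
elements of `2^F = F → Bool` (with the product σ-algebra, which is the Borel σ-algebra of
the Cantor space `2^F`). The set `S(F)` of (characteristic functions of) subgroups of `F`
is Borel, and there is a Borel map `f ↦ b f` assigning to (the characteristic function of)
each subgroup `H` of `F` a subset `B_H = {x | b f x = true}` which is a free generating
set of `H`: it is contained in `H`, it generates `H`, and the canonical homomorphism from
the free group on `B_H` to `F` (hence onto `H`) is injective, so that `H` is free with
basis `B_H`. -/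
theorem stmt3 :
    MeasurableSet {f : FreeGroup ℕ → Bool |
        ∃ H : Subgroup (FreeGroup ℕ), ∀ x, f x = true ↔ x ∈ H} ∧
      ∃ b : (FreeGroup ℕ → Bool) → (FreeGroup ℕ → Bool), Measurable b ∧
        ∀ (f : FreeGroup ℕ → Bool) (H : Subgroup (FreeGroup ℕ)),
          (∀ x, f x = true ↔ x ∈ H) →
            (∀ x, b f x = true → x ∈ H) ∧
            Subgroup.closure {x | b f x = true} = H ∧
            Function.Injective
              (FreeGroup.lift (fun y : {x // b f x = true} => (y : FreeGroup ℕ))) := by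
  constructor
  · exact BorelNS.measurable_subgroup_set
  · refine ⟨BorelNS.bFun, BorelNS.measurable_bFun, ?_⟩
    intro f H hf
    have hset : {x | BorelNS.bFun f x = true} = BorelNS.schreier H :=
      BorelNS.bFun_eq_schreier hf
    refine ⟨?_, ?_, ?_⟩
    · intro x hx
      have hx' : x ∈ {x | BorelNS.bFun f x = true} := hx
      rw [hset] at hx'
      exact BorelNS.schreier_val_mem H hx'
    · rw [hset, BorelNS.schreier_closure]
    · have hkey : ∀ S : Set (FreeGroup ℕ), S = BorelNS.schreier H →
          Function.Injective (FreeGroup.lift (fun y : S => (y : FreeGroup ℕ))) := by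
        rintro S rfl
        exact BorelNS.lift_schreier_injective H
      exact hkey _ hset
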